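/- For n odd, let R_0 be the constant sequence with all n entries equal to (n-1)/2. Then R_0 is a feasible score sequence, and its normalized score vector is the symmetric vector (p, p-1, ..., 1, 0, -1, ..., -p) with p = (n-1)/2; consequently there is a unique tournament with score sequence R_0 achieving the minimum number of upsets. -/

import Mathlib

/-- `r` is a feasible score sequence of length `n`: nondecreasing, total sum
`n(n-1)/2`, and satisfying the Landau inequalities. -/
def IsFeasible (n : ℕ) (r : Fin n → ℤ) : Prop :=
  Monotone r ∧ (∑ i, r i) = (n.choose 2 : ℤ) ∧
    ∀ k : ℕ, k ≤ n →
      (k.choose 2 : ℤ) ≤ ∑ i ∈ Finset.univ.filter (fun i : Fin n => (i : ℕ) < k), r i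

/-- `A` is (the adjacency matrix of) a tournament on `n` vertices. -/
def IsTournament {n : ℕ} (A : Fin n → Fin n → ℤ) : Prop :=
  (∀ i, A i i = 0) ∧
    ∀ i j, i ≠ j → (A i j = 1 ∧ A j i = 0) ∨ (A i j = 0 ∧ A j i = 1)

/-- The number of upsets of a tournament: entries `a_{ij} = 1` with `i < j`. -/
def upsets {n : ℕ} (A : Fin n → Fin n → ℤ) : ℕ :=
  (Finset.univ.filter (fun p : Fin n × Fin n => p.1 < p.2 ∧ A p.1 p.2 = 1)).card

/-- There is exactly one tournament matrix with score sequence `r` attaining the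
minimum number of upsets, i.e. `|U_min(R)| = 1`. -/
def UminUnique {n : ℕ} (r : Fin n → ℤ) : Prop :=
  ∃! A : Fin n → Fin n → ℤ,
    IsTournament A ∧ (∀ i, (∑ j, A i j) = r i) ∧
      ∀ B : Fin n → Fin n → ℤ, IsTournament B → (∀ i, (∑ j, B i j) = r i) →
        upsets A ≤ upsets B

/-- The symmetric block `(p, p-1, ..., 1, 0^t, -1, -2, ..., -p)`. -/
def symBlock (p t : ℕ) : List ℤ :=
  ((List.range p).map (fun s => (p : ℤ) - s)) ++ List.replicate t 0 ++
    (List.range p).map (fun s => -((s : ℤ) + 1))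

/-- A symmetric vector: either all zeros, or `(p, ..., 1, 0^t, -1, ..., -p)`
for some positive `p`. -/
def IsSymBlock (B : List ℤ) : Prop :=
  (∃ t, B = List.replicate t 0) ∨ ∃ p t, 0 < p ∧ B = symBlock p t

/-- `H` is a concatenation of symmetric vectors. -/
def IsConcatSym (H : List ℤ) : Prop :=
  ∃ L : List (List ℤ), H = L.flatten ∧ ∀ B ∈ L, IsSymBlock B

/-- The normalized score vector `h_i = r_i - (i-1)` of `r`, as a list. -/
def normalized (n : ℕ) (r : Fin n → ℤ) : List ℤ :=
  List.ofFn (fun i : Fin n => r i - (i : ℕ))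

/-- For odd `n = 2p+1`, the regular score sequence `((n-1)/2, ..., (n-1)/2)` is
feasible, its normalized score vector is the symmetric vector
`(p, p-1, ..., 1, 0, -1, ..., -p)`, and it has a unique minimum-upset
tournament. -/
lemma card_filter_fin (n : ℕ) (P : ℕ → Prop) [DecidablePred P] :
    (Finset.univ.filter (fun j : Fin n => P j.val)).card = ((Finset.range n).filter P).card := by
  rw [Finset.card_filter, Finset.card_filter,
    ← Fin.sum_univ_eq_sum_range (fun j => if P j then 1 else 0)]

/-- condition for the rotational tournament -/
def cnd (p a b : ℕ) : Prop := (b < a ∧ a - b ≤ p) ∨ (a < b ∧ p < b - a)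

instance cnd.dec (p a b : ℕ) : Decidable (cnd p a b) := by unfold cnd; infer_instance

def Amat (p : ℕ) : Fin (2*p+1) → Fin (2*p+1) → ℤ := fun i j =>
  if cnd p i.val j.val then 1 else 0

lemma Amat_eq_one {p : ℕ} {i j : Fin (2*p+1)} : Amat p i j = 1 ↔ cnd p i.val j.val := by
  unfold Amat; split_ifs with h <;> simp [h]

lemma Amat_tournament (p : ℕ) : IsTournament (Amat p) := by
  constructor
  · intro i; simp [Amat, cnd]
  · intro i j hne
    have hv : i.val ≠ j.val := fun h => hne (Fin.ext h)
    by_cases h1 : cnd p i.val j.val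
    · left
      have h2 : ¬ cnd p j.val i.val := by unfold cnd at *; omega
      simp [Amat, h1, h2]
    · right
      have h2 : cnd p j.val i.val := by
        unfold cnd at *
        have := i.isLt
        have := j.isLt
        omega
      simp [Amat, h1, h2]

-- row sums of Amat
lemma Amat_rowsum (p : ℕ) (i : Fin (2*p+1)) : (∑ j, Amat p i j) = (p:ℤ) := by
  have h1 : (∑ j, Amat p i j) =
      ((Finset.univ.filter (fun j : Fin (2*p+1) => cnd p i.val j.val)).card : ℤ) := by
    rw [← Finset.sum_boole]
    rfl
  rw [h1, card_filter_fin (2*p+1) (fun x => cnd p i.val x)]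
  have h2 : (Finset.range (2*p+1)).filter (fun x => cnd p i.val x) =
      Finset.Ico (i.val - p) i.val ∪ Finset.Ico (i.val + p + 1) (2*p+1) := by
    ext x
    simp only [Finset.mem_filter, Finset.mem_range]
    simp only [Finset.mem_filter, Finset.mem_range, Finset.mem_union, Finset.mem_Ico, cnd]
    omega
  rw [h2, Finset.card_union_of_disjoint, Nat.card_Ico, Nat.card_Ico]
  · have := i.isLt
    push_cast
    omega
  · rw [Finset.disjoint_left]
    intro x hx hx2
    simp only [Finset.mem_Ico] at hx hx2
    omega

section Generic
variable {n : ℕ} (B : Fin n → Fin n → ℤ)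

def uB (i : Fin n) : ℕ := (Finset.univ.filter (fun j : Fin n => i < j ∧ B i j = 1)).card
def wB (i : Fin n) : ℕ := (Finset.univ.filter (fun j : Fin n => j < i ∧ B i j = 1)).card

lemma upsets_eq_sum : upsets B = ∑ i, uB B i := by
  rw [upsets, Finset.card_filter, Fintype.sum_prod_type]
  congr 1
  funext i
  rw [uB, Finset.card_filter]

lemma card_lt_fin (i : Fin n) : (Finset.univ.filter (fun j : Fin n => j < i)).card = i.val := by
  have : (Finset.univ.filter (fun j : Fin n => j < i)) =
      (Finset.univ.filter (fun j : Fin n => j.val < i.val)) := by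
    apply Finset.filter_congr; intro x _; exact Fin.lt_def
  rw [this, card_filter_fin n (fun x => x < i.val)]
  rw [show (Finset.range n).filter (fun x => x < i.val) = Finset.range i.val from by
    ext x; simp only [Finset.mem_filter, Finset.mem_range]
    exact ⟨fun h => h.2, fun h => ⟨lt_trans h i.isLt, h⟩⟩]
  exact Finset.card_range _

lemma w_le (i : Fin n) : wB B i ≤ i.val := by
  rw [← card_lt_fin i, wB]
  apply Finset.card_le_card
  intro j hj
  simp only [Finset.mem_filter] at hj ⊢
  exact ⟨hj.1, hj.2.1⟩

lemma w_add_u (hT : IsTournament B) (i : Fin n) :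
    (∑ j, B i j) = ((wB B i + uB B i : ℕ) : ℤ) := by
  have h1 : (∑ j, B i j) = ∑ j, (if B i j = 1 then (1:ℤ) else 0) := by
    apply Finset.sum_congr rfl
    intro j _
    by_cases hj : j = i
    · rw [hj, hT.1]; norm_num
    · rcases hT.2 i j (fun h => hj h.symm) with ⟨h, _⟩ | ⟨h, _⟩ <;> simp [h]
  rw [h1, Finset.sum_boole]
  norm_cast
  have h2 : (Finset.univ.filter (fun j : Fin n => B i j = 1)) =
      (Finset.univ.filter (fun j : Fin n => j < i ∧ B i j = 1)) ∪
      (Finset.univ.filter (fun j : Fin n => i < j ∧ B i j = 1)) := by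
    ext j
    simp only [Finset.mem_filter, Finset.mem_union, Finset.mem_univ, true_and]
    constructor
    · intro h
      have hj : j ≠ i := by intro hji; rw [hji, hT.1] at h; norm_num at h
      rcases lt_or_gt_of_ne hj with hlt | hgt
      · exact Or.inl ⟨hlt, h⟩
      · exact Or.inr ⟨hgt, h⟩
    · rintro (⟨_, h⟩ | ⟨_, h⟩) <;> exact h
  rw [h2, Finset.card_union_of_disjoint, wB, uB]
  rw [Finset.disjoint_left]
  rintro j hj hj2
  simp only [Finset.mem_filter] at hj hj2
  exact absurd (lt_trans hj.2.1 hj2.2.1) (lt_irrefl j)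
end Generic

lemma uA_eq (p : ℕ) (i : Fin (2*p+1)) : uB (Amat p) i = p - i.val := by
  rw [uB]
  have h0 : (Finset.univ.filter (fun j : Fin (2*p+1) => i < j ∧ Amat p i j = 1)) =
      (Finset.univ.filter (fun j : Fin (2*p+1) => i.val < j.val ∧ cnd p i.val j.val)) := by
    apply Finset.filter_congr
    intro x _
    rw [Fin.lt_def, Amat_eq_one]
  rw [h0, card_filter_fin (2*p+1) (fun x => i.val < x ∧ cnd p i.val x)]
  rw [show (Finset.range (2*p+1)).filter (fun x => i.val < x ∧ cnd p i.val x) =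
      Finset.Ico (i.val + p + 1) (2*p+1) from by
    ext x
    simp only [Finset.mem_filter, Finset.mem_range]
    simp only [Finset.mem_filter, Finset.mem_range, Finset.mem_Ico, cnd]
    omega]
  rw [Nat.card_Ico]
  omega

-- lower bound for any tournament with row sums p
lemma u_lower {p : ℕ} {B : Fin (2*p+1) → Fin (2*p+1) → ℤ} (hT : IsTournament B)
    (hs : ∀ i, (∑ j, B i j) = (p:ℤ)) (i : Fin (2*p+1)) : p - i.val ≤ uB B i := by
  have h1 := w_add_u B hT i
  rw [hs i] at h1
  have h2 : wB B i + uB B i = p := by exact_mod_cast h1.symm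
  have h3 := w_le B i
  omega

lemma upsets_min {p : ℕ} {B : Fin (2*p+1) → Fin (2*p+1) → ℤ} (hT : IsTournament B)
    (hs : ∀ i, (∑ j, B i j) = (p:ℤ)) : upsets (Amat p) ≤ upsets B := by
  rw [upsets_eq_sum, upsets_eq_sum]
  apply Finset.sum_le_sum
  intro i _
  rw [uA_eq]
  exact u_lower hT hs i

section Struct
variable {p : ℕ} {B : Fin (2*p+1) → Fin (2*p+1) → ℤ}

lemma tour_cases (hT : IsTournament B) {i j : Fin (2*p+1)} (h : i ≠ j) (h2 : B i j ≠ 1) :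
    B i j = 0 ∧ B j i = 1 := by
  rcases hT.2 i j h with ⟨h3, _⟩ | ⟨h3, h4⟩
  · exact absurd h3 h2
  · exact ⟨h3, h4⟩

lemma tour_flip (hT : IsTournament B) {i j : Fin (2*p+1)} (h : i ≠ j) (h2 : B i j = 1) :
    B j i = 0 := by
  rcases hT.2 i j h with ⟨_, h4⟩ | ⟨h3, _⟩
  · exact h4
  · rw [h3] at h2; norm_num at h2

lemma F1 (hw : ∀ i, wB B i = min i.val p) {i j : Fin (2*p+1)} (hj : j < i) (hi : i.val ≤ p) :
    B i j = 1 := by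
  have h1 : (Finset.univ.filter (fun k : Fin (2*p+1) => k < i)).card = i.val := card_lt_fin i
  have h2 : wB B i = i.val := by rw [hw]; omega
  have hsub : (Finset.univ.filter (fun k : Fin (2*p+1) => k < i ∧ B i k = 1)) ⊆
      (Finset.univ.filter (fun k : Fin (2*p+1) => k < i)) := by
    intro k hk
    simp only [Finset.mem_filter] at hk ⊢
    exact ⟨hk.1, hk.2.1⟩
  have heq := Finset.eq_of_subset_of_card_le hsub (by rw [h1, ← h2]; rfl)
  have : j ∈ (Finset.univ.filter (fun k : Fin (2*p+1) => k < i)) := by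
    simp only [Finset.mem_filter]; exact ⟨Finset.mem_univ j, hj⟩
  rw [← heq] at this
  simp only [Finset.mem_filter] at this
  exact this.2.2

lemma F2 (hT : IsTournament B) (hu : ∀ i, uB B i = p - i.val) {i j : Fin (2*p+1)} (hj : i < j) (hi : p ≤ i.val) :
    B i j = 0 := by
  have h1 : uB B i = 0 := by rw [hu]; omega
  rw [uB, Finset.card_eq_zero] at h1
  have : j ∉ (Finset.univ.filter (fun k : Fin (2*p+1) => i < k ∧ B i k = 1)) := by
    rw [h1]; exact Finset.notMem_empty j
  simp only [Finset.mem_filter, Finset.mem_univ, true_and, not_and] at this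
  exact (tour_cases hT (Fin.ne_of_lt hj) (this hj)).1
end Struct

section Key
variable {p : ℕ} {B : Fin (2*p+1) → Fin (2*p+1) → ℤ}

lemma tour_of_zero (hT : IsTournament B) {i j : Fin (2*p+1)} (h : i ≠ j) (h2 : B j i = 0) :
    B i j = 1 := by
  rcases hT.2 i j h with ⟨h3, _⟩ | ⟨_, h4⟩
  · exact h3
  · rw [h4] at h2; norm_num at h2

lemma key (hT : IsTournament B) (hu : ∀ i, uB B i = p - i.val)
    (hw : ∀ i, wB B i = min i.val p) :
    ∀ m : ℕ, ∀ a : Fin (2*p+1), a.val = m → a.val < p → ∀ b : Fin (2*p+1), p < b.val →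
      (B a b = 1 ↔ p < b.val - a.val) := by
  intro m
  induction m using Nat.strong_induction_on with
  | _ m IH =>
  intro a ham hap b hbp
  have hN : ∀ x : Fin (2*p+1), x.val < 2*p+1 := fun x => x.isLt
  -- Step 2 : columns up to a+p are all losses for a
  have step2 : ∀ b' : Fin (2*p+1), p < b'.val → b'.val ≤ a.val + p → B a b' = 0 := by
    intro b' hb1 hb2
    have hab' : a ≠ b' := by intro h; rw [h] at hap; omega
    -- split the wins of b' over earlier vertices
    have hsplit : (Finset.univ.filter (fun j : Fin (2*p+1) => j < b' ∧ B b' j = 1)) =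
        (Finset.univ.filter (fun j : Fin (2*p+1) => p ≤ j.val ∧ j.val < b'.val ∧ B b' j = 1)) ∪
        (Finset.univ.filter (fun j : Fin (2*p+1) => j.val < p ∧ B b' j = 1)) := by
      ext j
      simp only [Finset.mem_filter, Finset.mem_union, Finset.mem_univ, true_and, Fin.lt_def]
      constructor
      · rintro ⟨h1, h2⟩
        rcases Nat.lt_or_ge j.val p with h3 | h3
        · exact Or.inr ⟨h3, h2⟩
        · exact Or.inl ⟨h3, h1, h2⟩
      · rintro (⟨h1, h2, h3⟩ | ⟨h1, h2⟩)
        · exact ⟨h2, h3⟩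
        · exact ⟨by omega, h2⟩
    have hdisj : Disjoint
        (Finset.univ.filter (fun j : Fin (2*p+1) => p ≤ j.val ∧ j.val < b'.val ∧ B b' j = 1))
        (Finset.univ.filter (fun j : Fin (2*p+1) => j.val < p ∧ B b' j = 1)) := by
      rw [Finset.disjoint_left]
      intro x hx hx2
      simp only [Finset.mem_filter] at hx hx2
      omega
    -- the high part consists of all of [p, b')
    have hhigh : (Finset.univ.filter
        (fun j : Fin (2*p+1) => p ≤ j.val ∧ j.val < b'.val ∧ B b' j = 1)) =
        (Finset.univ.filter (fun j : Fin (2*p+1) => p ≤ j.val ∧ j.val < b'.val)) := by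
      apply Finset.ext
      intro j
      simp only [Finset.mem_filter, Finset.mem_univ, true_and]
      constructor
      · rintro ⟨h1, h2, _⟩; exact ⟨h1, h2⟩
      · rintro ⟨h1, h2⟩
        refine ⟨h1, h2, ?_⟩
        have hjb : j ≠ b' := by intro h; rw [h] at h2; omega
        have : B j b' = 0 := F2 hT hu (Fin.lt_def.mpr h2) h1
        exact tour_of_zero hT (fun h => hjb h.symm) this
    have hcard_high : (Finset.univ.filter
        (fun j : Fin (2*p+1) => p ≤ j.val ∧ j.val < b'.val)).card = b'.val - p := by
      rw [card_filter_fin (2*p+1) (fun x => p ≤ x ∧ x < b'.val)]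
      rw [show (Finset.range (2*p+1)).filter (fun x => p ≤ x ∧ x < b'.val) =
          Finset.Ico p b'.val from by
        ext x; simp only [Finset.mem_filter, Finset.mem_range, Finset.mem_Ico]
        have := hN b'; omega]
      rw [Nat.card_Ico]
    have hwb : wB B b' = p := by rw [hw]; have := hN b'; omega
    have hcard_low : (Finset.univ.filter
        (fun j : Fin (2*p+1) => j.val < p ∧ B b' j = 1)).card = 2*p - b'.val := by
      have := hwb
      rw [wB, hsplit, Finset.card_union_of_disjoint hdisj, hhigh, hcard_high] at this
      omega
    -- losses of b' against [0, p)
    have hlsplit : (Finset.univ.filter (fun j : Fin (2*p+1) => j.val < p)) =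
        (Finset.univ.filter (fun j : Fin (2*p+1) => j.val < p ∧ B b' j = 1)) ∪
        (Finset.univ.filter (fun j : Fin (2*p+1) => j.val < p ∧ B j b' = 1)) := by
      ext j
      simp only [Finset.mem_filter, Finset.mem_union, Finset.mem_univ, true_and]
      constructor
      · intro h1
        have hjb : b' ≠ j := by intro h; rw [← h] at h1; omega
        rcases hT.2 b' j hjb with ⟨h2, _⟩ | ⟨_, h3⟩
        · exact Or.inl ⟨h1, h2⟩
        · exact Or.inr ⟨h1, h3⟩
      · rintro (⟨h1, _⟩ | ⟨h1, _⟩) <;> exact h1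
    have hldisj : Disjoint
        (Finset.univ.filter (fun j : Fin (2*p+1) => j.val < p ∧ B b' j = 1))
        (Finset.univ.filter (fun j : Fin (2*p+1) => j.val < p ∧ B j b' = 1)) := by
      rw [Finset.disjoint_left]
      intro x hx hx2
      simp only [Finset.mem_filter] at hx hx2
      have hxb : b' ≠ x := by intro h; rw [← h] at hx; omega
      have := tour_flip hT hxb hx.2.2
      rw [hx2.2.2] at this
      norm_num at this
    have hcard_all : (Finset.univ.filter (fun j : Fin (2*p+1) => j.val < p)).card = p := by
      rw [card_filter_fin (2*p+1) (fun x => x < p)]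
      rw [show (Finset.range (2*p+1)).filter (fun x => x < p) = Finset.range p from by
        ext x; simp only [Finset.mem_filter, Finset.mem_range]; omega]
      exact Finset.card_range p
    have hcard_loss : (Finset.univ.filter
        (fun j : Fin (2*p+1) => j.val < p ∧ B j b' = 1)).card = b'.val - p := by
      have := hcard_all
      rw [hlsplit, Finset.card_union_of_disjoint hldisj, hcard_low] at this
      omega
    -- the set of small-index vertices beating b' is exactly [0, b'-p)
    have hTsub : (Finset.univ.filter (fun j : Fin (2*p+1) => j.val < b'.val - p)) ⊆
        (Finset.univ.filter (fun j : Fin (2*p+1) => j.val < p ∧ B j b' = 1)) := by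
      intro j hj
      simp only [Finset.mem_filter, Finset.mem_univ, true_and] at hj ⊢
      have hj1 : j.val < p := by omega
      have hj2 : j.val < m := by omega
      refine ⟨hj1, ?_⟩
      rw [IH j.val hj2 j rfl hj1 b' hb1]
      omega
    have hcard_T : (Finset.univ.filter
        (fun j : Fin (2*p+1) => j.val < b'.val - p)).card = b'.val - p := by
      rw [card_filter_fin (2*p+1) (fun x => x < b'.val - p)]
      rw [show (Finset.range (2*p+1)).filter (fun x => x < b'.val - p) =
          Finset.range (b'.val - p) from by
        ext x; simp only [Finset.mem_filter, Finset.mem_range]; have := hN b'; omega]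
      exact Finset.card_range _
    have hTeq := Finset.eq_of_subset_of_card_le hTsub (by rw [hcard_T, hcard_loss])
    -- a is not in that set, hence B a b' ≠ 1
    by_contra hcon
    have h1 : B a b' = 1 := by
      rcases hT.2 a b' hab' with ⟨h2, _⟩ | ⟨h2, _⟩
      · exact h2
      · exact absurd h2 hcon
    have h2 : a ∈ (Finset.univ.filter
        (fun j : Fin (2*p+1) => j.val < p ∧ B j b' = 1)) := by
      simp only [Finset.mem_filter, Finset.mem_univ, true_and]
      exact ⟨hap, h1⟩
    rw [← hTeq] at h2
    simp only [Finset.mem_filter] at h2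
    omega
  -- Step 3 : wins of a among the top block are exactly (a+p, 2p]
  have hwins : (Finset.univ.filter (fun b' : Fin (2*p+1) => p < b'.val ∧ B a b' = 1)) =
      (Finset.univ.filter (fun b' : Fin (2*p+1) => a < b' ∧ B a b' = 1)) := by
    ext b'
    simp only [Finset.mem_filter, Finset.mem_univ, true_and, Fin.lt_def]
    constructor
    · rintro ⟨h1, h2⟩; exact ⟨by omega, h2⟩
    · rintro ⟨h1, h2⟩
      refine ⟨?_, h2⟩
      by_contra h3
      have h4 : b'.val ≤ p := by omega
      have h5 : B b' a = 1 := F1 hw (Fin.lt_def.mpr h1) h4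
      have h6 := tour_flip hT (by intro h; rw [h] at h1; omega : b' ≠ a) h5
      rw [h6] at h2
      norm_num at h2
  have hwins_card : (Finset.univ.filter
      (fun b' : Fin (2*p+1) => p < b'.val ∧ B a b' = 1)).card = p - a.val := by
    rw [hwins]
    have := hu a
    rw [uB] at this
    exact this
  have hwsub : (Finset.univ.filter (fun b' : Fin (2*p+1) => p < b'.val ∧ B a b' = 1)) ⊆
      (Finset.univ.filter (fun b' : Fin (2*p+1) => a.val + p < b'.val)) := by
    intro b' hb'
    simp only [Finset.mem_filter, Finset.mem_univ, true_and] at hb' ⊢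
    by_contra h3
    have := step2 b' hb'.1 (by omega)
    rw [this] at hb'
    norm_num at hb'
  have hwcard2 : (Finset.univ.filter
      (fun b' : Fin (2*p+1) => a.val + p < b'.val)).card = p - a.val := by
    rw [card_filter_fin (2*p+1) (fun x => a.val + p < x)]
    rw [show (Finset.range (2*p+1)).filter (fun x => a.val + p < x) =
        Finset.Ico (a.val + p + 1) (2*p+1) from by
      ext x; simp only [Finset.mem_filter, Finset.mem_range, Finset.mem_Ico]; omega]
    rw [Nat.card_Ico]
    omega
  have hweq := Finset.eq_of_subset_of_card_le hwsub (by rw [hwcard2, hwins_card])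
  -- conclude
  constructor
  · intro h1
    by_contra h2
    have h3 := step2 b hbp (by omega)
    rw [h3] at h1
    norm_num at h1
  · intro h1
    have : b ∈ (Finset.univ.filter (fun b' : Fin (2*p+1) => a.val + p < b'.val)) := by
      simp only [Finset.mem_filter, Finset.mem_univ, true_and]
      omega
    rw [← hweq] at this
    simp only [Finset.mem_filter] at this
    exact this.2.2
end Key

lemma uniq {p : ℕ} {B : Fin (2*p+1) → Fin (2*p+1) → ℤ} (hT : IsTournament B)
    (hs : ∀ i, (∑ j, B i j) = (p:ℤ)) (hmin : upsets B ≤ upsets (Amat p)) :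
    B = Amat p := by
  have hle : ∀ i, p - i.val ≤ uB B i := u_lower hT hs
  have hu : ∀ i, uB B i = p - i.val := by
    intro i
    by_contra h
    have h1 : p - i.val < uB B i := lt_of_le_of_ne (hle i) (fun h2 => h h2.symm)
    have h2 : (∑ j : Fin (2*p+1), (p - j.val)) < ∑ j, uB B j :=
      Finset.sum_lt_sum (fun j _ => hle j) ⟨i, Finset.mem_univ i, h1⟩
    have h3 : upsets (Amat p) = ∑ j : Fin (2*p+1), (p - j.val) := by
      rw [upsets_eq_sum]
      exact Finset.sum_congr rfl (fun j _ => uA_eq p j)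
    rw [← h3, ← upsets_eq_sum] at h2
    omega
  have hw : ∀ i, wB B i = min i.val p := by
    intro i
    have h1 := w_add_u B hT i
    rw [hs i] at h1
    have h2 : wB B i + uB B i = p := by exact_mod_cast h1.symm
    have h3 := w_le B i
    rw [hu i] at h2
    omega
  -- agreement for j < i
  have agree : ∀ i j : Fin (2*p+1), j < i → B i j = Amat p i j := by
    intro i j hj
    have hji : j.val < i.val := Fin.lt_def.mp hj
    have hij : i ≠ j := by intro h; rw [h] at hji; omega
    have hiN := i.isLt
    rcases Nat.lt_or_ge p i.val with hi | hi
    · rcases Nat.lt_or_ge j.val p with hjp | hjp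
      · -- j < p < i : use key
        have hk := key hT hu hw j.val j rfl hjp i hi
        rcases Nat.lt_or_ge p (i.val - j.val) with hd | hd
        · have h1 : B j i = 1 := hk.mpr hd
          have h2 : B i j = 0 := tour_flip hT (fun h => hij h.symm) h1
          rw [h2, Amat]
          rw [if_neg]
          unfold cnd
          omega
        · have h1 : B j i = 0 := by
            rcases hT.2 j i (fun h => hij h.symm) with ⟨h2, _⟩ | ⟨h2, _⟩
            · exact absurd (hk.mp h2) (by omega)
            · exact h2
          have h2 : B i j = 1 := tour_of_zero hT hij h1
          rw [h2, Amat, if_pos]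
          unfold cnd
          omega
      · -- p ≤ j < i
        have h1 : B j i = 0 := F2 hT hu hj hjp
        have h2 : B i j = 1 := tour_of_zero hT hij h1
        rw [h2, Amat, if_pos]
        unfold cnd
        omega
    · -- i ≤ p
      have h2 : B i j = 1 := F1 hw hj hi
      rw [h2, Amat, if_pos]
      unfold cnd
      omega
  funext i j
  rcases eq_or_ne i j with rfl | hij
  · rw [hT.1, (Amat_tournament p).1]
  · rcases lt_or_gt_of_ne hij with h | h
    · have h1 := agree j i h
      rcases hT.2 i j hij with ⟨h2, h3⟩ | ⟨h2, h3⟩ <;>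
        rcases (Amat_tournament p).2 i j hij with ⟨h4, h5⟩ | ⟨h4, h5⟩
      · rw [h2, h4]
      · rw [h3, h5] at h1; norm_num at h1
      · rw [h3, h5] at h1; norm_num at h1
      · rw [h2, h4]
    · exact agree i j h

theorem final (p : ℕ) :
    ∃! A : Fin (2*p+1) → Fin (2*p+1) → ℤ,
      IsTournament A ∧ (∀ i, (∑ j, A i j) = (p:ℤ)) ∧
        ∀ B : Fin (2*p+1) → Fin (2*p+1) → ℤ, IsTournament B → (∀ i, (∑ j, B i j) = (p:ℤ)) →
          upsets A ≤ upsets B := by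
  refine ⟨Amat p, ⟨Amat_tournament p, Amat_rowsum p, fun B hTB hsB => upsets_min hTB hsB⟩, ?_⟩
  rintro B ⟨hTB, hsB, hminB⟩
  exact uniq hTB hsB (hminB (Amat p) (Amat_tournament p) (Amat_rowsum p))

lemma symBlock_eq' (p t : ℕ) : (symBlock p t) =
    ((List.range p).map (fun s : ℕ => (p:ℤ) - s)) ++ List.replicate t (0:ℤ) ++
      (List.range p).map (fun s : ℕ => -((s:ℤ)+1)) := by
  simp only [symBlock, bind_pure_comp, List.map_eq_map, List.map_map]
  rfl

theorem regular_unique (p : ℕ) :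
    IsFeasible (2 * p + 1) (fun _ : Fin (2 * p + 1) => (p : ℤ)) ∧
      normalized (2 * p + 1) (fun _ => (p : ℤ)) = symBlock p 1 ∧
      UminUnique (fun _ : Fin (2 * p + 1) => (p : ℤ)) := by
  have hch : ∀ m : ℕ, (m.choose 2) = m * (m-1) / 2 := fun m => Nat.choose_two_right m
  refine ⟨⟨monotone_const, ?_, ?_⟩, ?_, final p⟩
  · rw [Finset.sum_const, Finset.card_univ, Fintype.card_fin, hch]
    have h0 : 2*p+1-1 = 2*p := by omega
    rw [h0]
    have : (2*p+1) * (2*p) / 2 = (2*p+1) * p := by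
      have h1 : (2*p+1) * (2*p) = ((2*p+1) * p) * 2 := by ring
      rw [h1, Nat.mul_div_cancel _ (by norm_num)]
    rw [this]
    push_cast
    ring
  · intro k hk
    rw [Finset.sum_const]
    have hcard : (Finset.univ.filter (fun i : Fin (2*p+1) => (i : ℕ) < k)).card = k := by
      rw [card_filter_fin (2*p+1) (fun x => x < k)]
      rw [show (Finset.range (2*p+1)).filter (fun x => x < k) = Finset.range k from by
        ext x; simp only [Finset.mem_filter, Finset.mem_range]; omega]
      exact Finset.card_range k
    rw [hcard, hch]
    have h1 : k * (k-1) / 2 ≤ k * p := by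
      have h2 : k * (k-1) ≤ (k * p) * 2 := by
        calc k * (k-1) ≤ k * (2*p) := Nat.mul_le_mul_left k (by omega)
        _ = (k * p) * 2 := by ring
      omega
    calc ((k * (k-1) / 2 : ℕ) : ℤ) ≤ ((k * p : ℕ) : ℤ) := by exact_mod_cast h1
    _ = k • (p : ℤ) := by push_cast; ring
  · rw [symBlock_eq']
    apply List.ext_getElem
    · simp only [normalized, List.length_ofFn, List.length_append,
        List.length_map, List.length_range, List.length_replicate]
      omega
    · intro i h1 h2
      simp only [normalized, List.length_ofFn] at h1
      simp only [normalized, List.getElem_ofFn]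
      rw [List.getElem_append]
      simp only [List.length_append, List.length_map, List.length_range, List.length_replicate]
      split_ifs with hc
      · rw [List.getElem_append]
        simp only [List.length_map, List.length_range]
        split_ifs with hc2
        · rw [List.getElem_map, List.getElem_range]
        · rw [List.getElem_replicate]
          push_cast
          omega
      · rw [List.getElem_map, List.getElem_range]
        push_cast
        omega
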